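/- For every positive integer k, if G is a graph of pathwidth less than k that has a path of order n, then G has an induced path of order at least (1/3)·n^(1/k). -/

import Mathlib

open SimpleGraph Real

/-- `G` has a (not necessarily induced) path on `n` vertices. -/
def HasPathOfOrder {V : Type*} (G : SimpleGraph V) (n : ℕ) : Prop :=
  ∃ (u v : V) (p : G.Walk u v), p.IsPath ∧ p.length + 1 = n

/-- `G` has a Hamiltonian path. -/
def HasHamPath {V : Type*} (G : SimpleGraph V) : Prop :=
  ∃ (u v : V) (p : G.Walk u v), p.IsPath ∧ ∀ w, w ∈ p.support

/-- `G` has an induced path on at least `r` vertices (an induced subgraph isomorphic to a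
path graph on `m ≥ r` vertices). -/
def HasInducedPathGE {V : Type*} (G : SimpleGraph V) (r : ℝ) : Prop :=
  ∃ m : ℕ, r ≤ (m : ℝ) ∧ Nonempty (pathGraph m ↪g G)

/-- A tree (or path) representation of `G` over the graph `T`: every vertex `v` of `G` has a
nonempty connected model `model v ⊆ V(T)`, and models of adjacent vertices intersect. -/
structure TreeRep {V N : Type*} (G : SimpleGraph V) (T : SimpleGraph N) where
  model : V → Set N
  model_connected : ∀ v, (T.induce (model v)).Connected
  adj_meet : ∀ ⦃u v⦄, G.Adj u v → (model u ∩ model v).Nonempty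

namespace TreeRep

variable {V N : Type*} {G : SimpleGraph V} {T : SimpleGraph N}

/-- The bag of the representation at a node `t`. -/
def bag (R : TreeRep G T) (t : N) : Set V := {v | t ∈ R.model v}

/-- The representation has width less than `k`, i.e. all bags have at most `k` vertices. -/
def WidthLT (R : TreeRep G T) (k : ℕ) : Prop := ∀ t, (R.bag t).ncard ≤ k

/-- The representation has width at most `k`, i.e. all bags have at most `k + 1` vertices. -/
def WidthLE (R : TreeRep G T) (k : ℕ) : Prop := ∀ t, (R.bag t).ncard ≤ k + 1

/-- The weight of a path `p` of `T`: the number of vertices of `G` whose model meets `p`. -/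
noncomputable def pathWeight (R : TreeRep G T) {x y : N} (p : T.Walk x y) : ℕ :=
  {v : V | ∃ t ∈ p.support, t ∈ R.model v}.ncard

/-- A representation is varied if no bag is contained in the bag at a neighboring node. -/
def Varied (R : TreeRep G T) : Prop := ∀ ⦃t t'⦄, T.Adj t t' → ¬ R.bag t ⊆ R.bag t'

/-- The representation has adhesion less than `a`: the adhesion set of every edge of `T`
has fewer than `a` vertices. -/
def AdhesionLT (R : TreeRep G T) (a : ℕ) : Prop :=
  ∀ ⦃t t'⦄, T.Adj t t' → (R.bag t ∩ R.bag t').ncard < a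

/-- The torso of the representation at a node `t`: the subgraph induced on the bag at `t`
together with all edges inside adhesion sets of edges of `T` incident to `t`. -/
def torso (R : TreeRep G T) (t : N) : SimpleGraph (R.bag t) :=
  SimpleGraph.fromRel (fun u v =>
    G.Adj u v ∨ ∃ t', T.Adj t t' ∧ (u : V) ∈ R.bag t' ∧ (v : V) ∈ R.bag t')

end TreeRep

/-- `G` has pathwidth less than `k`: it has a representation over a path all of whose bags
have at most `k` vertices. -/
def PathwidthLT {V : Type*} (G : SimpleGraph V) (k : ℕ) : Prop :=
  ∃ (m : ℕ) (R : TreeRep G (pathGraph (m + 1))), R.WidthLT k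

/-- `G` has treewidth less than `k`: it has a representation over a tree all of whose bags
have at most `k` vertices. -/
def TreewidthLT {V : Type*} (G : SimpleGraph V) (k : ℕ) : Prop :=
  ∃ (N : Type) (_ : Fintype N) (T : SimpleGraph N), T.IsTree ∧
    ∃ R : TreeRep G T, R.WidthLT k

/-- `G` has treewidth at most `k`. -/
def TreewidthLE {V : Type*} (G : SimpleGraph V) (k : ℕ) : Prop :=
  ∃ (N : Type) (_ : Fintype N) (T : SimpleGraph N), T.IsTree ∧
    ∃ R : TreeRep G T, R.WidthLE k

/-- A leaf of a graph: a vertex with at most one neighbor. -/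
def IsLeafNode {N : Type*} (T : SimpleGraph N) (l : N) : Prop :=
  (T.neighborSet l).Subsingleton

/-- `H` is obtained from `G` by a sequence of edge contractions: there is a surjection
from `V(G)` onto `V(H)` with connected fibers inducing the adjacency of `H`. -/
def IsContraction {W V : Type*} (H : SimpleGraph W) (G : SimpleGraph V) : Prop :=
  ∃ f : V → W, Function.Surjective f ∧
    (∀ w : W, (G.induce (f ⁻¹' {w})).Connected) ∧
    (∀ x y : W, H.Adj x y ↔ x ≠ y ∧ ∃ u v : V, f u = x ∧ f v = y ∧ G.Adj u v)

/-- `G` is an interval graph: the intersection graph of a family of real intervals. -/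
def IsIntervalGraph {V : Type*} (G : SimpleGraph V) : Prop :=
  ∃ l r : V → ℝ, (∀ v, l v ≤ r v) ∧
    ∀ u v : V, G.Adj u v ↔ u ≠ v ∧ max (l u) (l v) ≤ min (r u) (r v)

/-- The internal vertices of a walk: vertices of the walk distinct from its two endpoints. -/
def WalkInternal {V : Type*} {G : SimpleGraph V} {x y : V} (p : G.Walk x y) : Set V :=
  {w | w ∈ p.support ∧ w ≠ x ∧ w ≠ y}

/-- `H` is a topological minor of `G`: there are branch vertices `φ u` for `u ∈ V(H)` and
internally disjoint paths of `G` joining them, one for each edge of `H`. -/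
def IsTopMinor {W V : Type*} (H : SimpleGraph W) (G : SimpleGraph V) : Prop :=
  ∃ (φ : W ↪ V) (P : ∀ ⦃u v : W⦄, H.Adj u v → G.Walk (φ u) (φ v)),
    (∀ ⦃u v⦄ (h : H.Adj u v), (P h).IsPath) ∧
    (∀ ⦃u v⦄ (h : H.Adj u v), P h.symm = (P h).reverse) ∧
    (∀ ⦃u v⦄ (h : H.Adj u v), ∀ w ∈ WalkInternal (P h), w ∉ Set.range φ) ∧
    (∀ ⦃u v u' v'⦄ (h : H.Adj u v) (h' : H.Adj u' v'), s(u, v) ≠ s(u', v') →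
      ∀ w ∈ WalkInternal (P h), w ∉ WalkInternal (P h'))

/-- `H` is (an isomorphic copy of) a subgraph of `G`. -/
def ContainsSubgraphCopy {A B : Type*} (H : SimpleGraph A) (G : SimpleGraph B) : Prop :=
  ∃ f : A ↪ B, ∀ u v : A, H.Adj u v → G.Adj (f u) (f v)

/-- `G` is `k`-degenerate: every (induced) subgraph has a vertex of degree at most `k`. -/
def Degenerate {V : Type*} (G : SimpleGraph V) (k : ℕ) : Prop :=
  ∀ s : Set V, s.Nonempty → ∃ v ∈ s, {w | w ∈ s ∧ G.Adj v w}.ncard ≤ k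

/-- The cycle on `ZMod m` (for `m ≥ 3` this is the cycle graph on `m` vertices). -/
def ringGraph (m : ℕ) : SimpleGraph (ZMod m) :=
  SimpleGraph.fromRel (fun i j => j = i + 1)

/-- Cliquewidth expressions with labels in `Fin k`. -/
inductive CWExpr (k : ℕ) where
  | vertex (l : Fin k) : CWExpr k
  | union (e₁ e₂ : CWExpr k) : CWExpr k
  | addEdges (i j : Fin k) (hij : i ≠ j) (e : CWExpr k) : CWExpr k
  | relabel (f : Fin k → Fin k) (e : CWExpr k) : CWExpr k

namespace CWExpr

variable {k : ℕ}

/-- The vertex set of the graph described by a cliquewidth expression. -/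
def verts : CWExpr k → Type
  | vertex _ => Unit
  | union e₁ e₂ => e₁.verts ⊕ e₂.verts
  | addEdges _ _ _ e => e.verts
  | relabel _ e => e.verts

/-- The labelling of the vertices described by a cliquewidth expression. -/
def label : (e : CWExpr k) → e.verts → Fin k
  | vertex l, _ => l
  | union e₁ _, Sum.inl x => e₁.label x
  | union _ e₂, Sum.inr x => e₂.label x
  | addEdges _ _ _ e, x => e.label x
  | relabel f e, x => f (e.label x)

/-- The adjacency relation described by a cliquewidth expression. -/
def adj : (e : CWExpr k) → e.verts → e.verts → Prop
  | vertex _, _, _ => False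
  | union e₁ _, Sum.inl x, Sum.inl y => e₁.adj x y
  | union _ e₂, Sum.inr x, Sum.inr y => e₂.adj x y
  | union _ _, _, _ => False
  | addEdges i j _ e, x, y =>
      e.adj x y ∨ (e.label x = i ∧ e.label y = j) ∨ (e.label x = j ∧ e.label y = i)
  | relabel _ e, x, y => e.adj x y

/-- The graph described by a cliquewidth expression. -/
def graph (e : CWExpr k) : SimpleGraph e.verts := SimpleGraph.fromRel e.adj

end CWExpr

/-- `G` has cliquewidth at most `k`: it is isomorphic to the graph of a cliquewidth
expression with at most `k` labels. -/
def CliquewidthLE {V : Type*} (G : SimpleGraph V) (k : ℕ) : Prop :=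
  ∃ e : CWExpr k, Nonempty (G ≃g e.graph)

/-- `G` has `(k, Δ)`-almost bounded degree: removing at most `k` vertices yields a graph of
maximum degree at most `Δ`. -/
def AlmostBoundedDegree {V : Type*} (G : SimpleGraph V) (k Δ : ℕ) : Prop :=
  ∃ X : Set V, X.ncard ≤ k ∧ ∀ v ∉ X, {w | w ∉ X ∧ G.Adj v w}.ncard ≤ Δ

/-- An embedding scheme for `H`: a rotation system (a permutation of the darts that is,
around each vertex, a single cycle on the darts leaving that vertex) together with a
signature on the edges. -/
structure EmbScheme {W : Type*} (H : SimpleGraph W) where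
  rot : Equiv.Perm H.Dart
  rot_fst : ∀ d : H.Dart, (rot d).fst = d.fst
  rot_cyclic : ∀ d d' : H.Dart, d.fst = d'.fst → ∃ n : ℕ, (rot ^ n) d = d'
  sign : Sym2 W → Bool

namespace EmbScheme

variable {W : Type*} {H : SimpleGraph W}

/-- The face-tracing step of an embedding scheme, acting on darts with a direction. -/
def faceStep (S : EmbScheme H) : H.Dart × Bool → H.Dart × Bool :=
  fun p =>
    let s' := xor p.2 (S.sign p.1.edge)
    ((if s' then S.rot.symm p.1.symm else S.rot p.1.symm), s')

/-- The number of orbits of a function. -/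
noncomputable def orbitCount {α : Type*} (f : α → α) : ℕ :=
  Nat.card (Quotient (Relation.EqvGen.setoid (fun x y => f x = y)))

/-- The scheme describes an embedding of `H` in a surface of Euler genus at most `g`.
Isolated vertices each bound one face; every other face is traced twice by `faceStep`,
so the number of faces is `orbitCount (faceStep) / 2` plus the number of isolated
vertices, and the Euler genus of the embedding is `2c - |V| + |E| - F`. -/
def GenusLE (S : EmbScheme H) (g : ℕ) : Prop :=
  2 * Nat.card H.ConnectedComponent + Nat.card H.edgeSet ≤
    g + Nat.card W +
      (orbitCount S.faceStep / 2 + Nat.card {v : W | ∀ w, ¬ H.Adj v w})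

/-- The cycle `e 0, e 1, …, e (m-1)` is a facial cycle of the embedding scheme `S`:
its consecutive darts are consecutive in a face traversal. -/
def IsFacialCycle (S : EmbScheme H) {m : ℕ} (e : ZMod m → W)
    (hadj : ∀ x : ZMod m, H.Adj (e x) (e (x + 1))) : Prop :=
  ∃ b : ZMod m → Bool, ∀ x : ZMod m,
    S.faceStep (⟨(e x, e (x + 1)), hadj x⟩, b x) =
      (⟨(e (x + 1), e (x + 1 + 1)), hadj (x + 1)⟩, b (x + 1))

end EmbScheme

/-- `Hs` has a `C`-vortex of width less than `k`, where `C` is the cycle of `G₀` given by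
`e`: the vertices common to `Hs` and `G₀` are exactly those of `C`, and `Hs` has a cycle
representation over `C` in which the model of each vertex of `C` contains that vertex and
every bag has at most `k` vertices. -/
def IsVortex {V : Type*} {G : SimpleGraph V} (Hs G₀ : G.Subgraph) {m : ℕ}
    (e : ZMod m → G₀.verts) (k : ℕ) : Prop :=
  Hs.verts ∩ G₀.verts = Subtype.val '' Set.range e ∧
  ∃ model : Hs.verts → Set (ZMod m),
    (∀ v, ((ringGraph m).induce (model v)).Connected) ∧
    (∀ (x : ZMod m) (v : Hs.verts), (e x : V) = (v : V) → x ∈ model v) ∧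
    (∀ ⦃u v⦄, Hs.coe.Adj u v → (model u ∩ model v).Nonempty) ∧
    (∀ t : ZMod m, {v : Hs.verts | t ∈ model v}.ncard ≤ k)

/-- `G` is `(g, p, a, k)`-almost-embeddable. -/
def AlmostEmbeddable {V : Type*} (G : SimpleGraph V) (g p a k : ℕ) : Prop :=
  ∃ A : Set V, A.ncard ≤ a ∧
  ∃ s : ℕ, s ≤ p ∧
  ∃ (G₀ : G.Subgraph) (Gv : Fin s → G.Subgraph),
    (G₀ ⊔ ⨆ i, Gv i) = (⊤ : G.Subgraph).deleteVerts A ∧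
    (∀ i j, i ≠ j → Disjoint (Gv i).verts (Gv j).verts) ∧
    ∃ S : EmbScheme G₀.coe, S.GenusLE g ∧
    ∃ (m : Fin s → ℕ) (e : ∀ i, ZMod (m i) → G₀.verts)
      (hadj : ∀ i x, G₀.coe.Adj (e i x) (e i (x + 1))),
      (∀ i, 3 ≤ m i) ∧
      (∀ i, Function.Injective (e i)) ∧
      (∀ i, S.IsFacialCycle (e i) (hadj i)) ∧
      (∀ i j, i ≠ j → Disjoint (Set.range (e i)) (Set.range (e j))) ∧
      (∀ i, IsVortex (Gv i) G₀ (e i) k)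


namespace Stmt0Aux

variable {V : Type*} {G : SimpleGraph V} {m : ℕ}

/-- Take the first `n` steps of a walk. -/
def wtake {u v : V} : (p : G.Walk u v) → (n : ℕ) → G.Walk u (p.getVert n)
  | p, 0 => Walk.nil.copy rfl (p.getVert_zero).symm
  | Walk.nil, n+1 => Walk.nil.copy rfl (Walk.getVert_of_length_le _ (by simp)).symm
  | Walk.cons h q, n+1 => Walk.cons h (wtake q n)

lemma wtake_length {u v : V} : ∀ (p : G.Walk u v) (n : ℕ), (wtake p n).length = min n p.length
  | p, 0 => by simp [wtake]
  | Walk.nil, n+1 => by simp [wtake]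
  | Walk.cons h q, n+1 => by
      simp [wtake, wtake_length q n, Nat.succ_min_succ]

lemma wdrop_length {u v : V} : ∀ (p : G.Walk u v) (n : ℕ), (p.drop n).length = p.length - n
  | Walk.nil, n => by simp [Walk.drop]
  | Walk.cons h q, 0 => by simp [Walk.drop]
  | Walk.cons h q, n+1 => by simp [Walk.drop, wdrop_length q n]

lemma getVert_mem_support' {u v : V} (p : G.Walk u v) {n : ℕ} (hn : n ≤ p.length) :
    p.getVert n ∈ p.support :=
  Walk.mem_support_iff_exists_getVert.mpr ⟨n, rfl, hn⟩

lemma IsPath.getVert_inj {u v : V} : ∀ (p : G.Walk u v), p.IsPath →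
    ∀ {i j : ℕ}, i ≤ p.length → j ≤ p.length → p.getVert i = p.getVert j → i = j := by
  intro p hp
  induction p with
  | nil => intro i j hi hj _; simp at hi hj; omega
  | @cons a b c h q ih =>
    rw [Walk.cons_isPath_iff] at hp
    intro i j hi hj heq
    match i, j with
    | 0, 0 => rfl
    | 0, j+1 =>
      exfalso
      rw [Walk.getVert_zero, Walk.getVert_cons_succ] at heq
      exact hp.2 (heq ▸ getVert_mem_support' q (by simpa using hj))
    | i+1, 0 =>
      exfalso
      rw [Walk.getVert_zero, Walk.getVert_cons_succ] at heq
      exact hp.2 (heq ▸ getVert_mem_support' q (by simpa using hi))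
    | i+1, j+1 =>
      rw [Walk.getVert_cons_succ, Walk.getVert_cons_succ] at heq
      have := ih hp.1 (by simpa using hi) (by simpa using hj) heq
      omega

lemma minwalk_not_adj {u v : V} (p : G.Walk u v)
    (hmin : ∀ q : G.Walk u v, p.length ≤ q.length)
    {i j : ℕ} (hij : i + 1 < j) (hj : j ≤ p.length) :
    ¬ G.Adj (p.getVert i) (p.getVert j) := by
  intro hadj
  have hq := hmin ((wtake p i).append (Walk.cons hadj (p.drop j)))
  rw [Walk.length_append, Walk.length_cons, wtake_length, wdrop_length] at hq
  omega

/-- The graph embedding of a path graph given by an induced path. -/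
noncomputable def embOfInduced {u v : V} (p : G.Walk u v) (hp : p.IsPath)
    (hind : ∀ i j : ℕ, i + 1 < j → j ≤ p.length → ¬ G.Adj (p.getVert i) (p.getVert j)) :
    pathGraph (p.length + 1) ↪g G where
  toFun := fun i => p.getVert i.val
  inj' := by
    intro a b hab
    exact Fin.ext (IsPath.getVert_inj p hp (Nat.lt_succ_iff.mp a.isLt)
      (Nat.lt_succ_iff.mp b.isLt) hab)
  map_rel_iff' := by
    intro a b
    simp only [Function.Embedding.coeFn_mk, pathGraph_adj]
    constructor
    · intro hadj
      rcases lt_trichotomy a.val b.val with hlt | heq | hgt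
      · left
        by_contra hne
        exact hind a.val b.val (by omega) (Nat.lt_succ_iff.mp b.isLt) hadj
      · exact absurd (Fin.ext heq ▸ hadj) (G.irrefl)
      · right
        by_contra hne
        exact hind b.val a.val (by omega) (Nat.lt_succ_iff.mp a.isLt) hadj.symm
    · rintro (h | h)
      · have := p.adj_getVert_succ (i := a.val) (by omega)
        rwa [h] at this
      · have := p.adj_getVert_succ (i := b.val) (by omega)
        rw [h] at this
        exact this.symm

lemma exists_min_walk {u v : V} (hr : G.Reachable u v) :
    ∃ p : G.Walk u v, p.IsPath ∧ ∀ q : G.Walk u v, p.length ≤ q.length := by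
  classical
  obtain ⟨w, hw⟩ := hr.exists_walk_length_eq_dist
  refine ⟨w.bypass, w.bypass_isPath, fun q => ?_⟩
  calc w.bypass.length ≤ w.length := w.length_bypass_le
    _ = G.dist u v := hw
    _ ≤ q.length := SimpleGraph.dist_le q


lemma between_of_walk {C : Set (Fin (m+1))} {p q : ↥C}
    (w : ((pathGraph (m+1)).induce C).Walk p q) (x : Fin (m+1))
    (hp : (p : Fin (m+1)) ≤ x) (hq : x ≤ (q : Fin (m+1))) : x ∈ C := by
  revert hp hq
  induction w with
  | @nil a =>
    intro hp hq
    have : (a : Fin (m+1)) = x := le_antisymm hp hq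
    exact this ▸ a.2
  | @cons a b c hab w ih =>
    intro hp hq
    rcases le_or_gt x (a : Fin (m+1)) with hxa | hax
    · have : (a : Fin (m+1)) = x := le_antisymm hp hxa
      exact this ▸ a.2
    · refine ih ?_ hq
      have hadj : (pathGraph (m+1)).Adj a b := by simpa using hab
      rw [pathGraph_adj] at hadj
      rw [Fin.le_def]
      rw [Fin.lt_def] at hax
      omega

lemma model_between (R : TreeRep G (pathGraph (m+1))) (v : V)
    {a b x : Fin (m+1)} (ha : a ∈ R.model v) (hb : b ∈ R.model v)
    (hax : a ≤ x) (hxb : x ≤ b) : x ∈ R.model v := by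
  obtain ⟨w⟩ := (R.model_connected v).preconnected ⟨a, ha⟩ ⟨b, hb⟩
  exact between_of_walk w x hax hxb

lemma model_nonempty (R : TreeRep G (pathGraph (m+1))) (v : V) :
    (R.model v).Nonempty := by
  have := (R.model_connected v).nonempty
  rcases this with ⟨⟨x, hx⟩⟩
  exact ⟨x, hx⟩

lemma walk_cover (R : TreeRep G (pathGraph (m+1))) {u v : V} (w : G.Walk u v)
    (x : Fin (m+1)) (h1 : ∃ a ∈ R.model u, a ≤ x) (h2 : ∃ b ∈ R.model v, x ≤ b) :
    ∃ y ∈ w.support, x ∈ R.model y := by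
  induction w with
  | nil =>
    obtain ⟨a, ha, hax⟩ := h1
    obtain ⟨b, hb, hxb⟩ := h2
    exact ⟨_, by simp, model_between R _ ha hb hax hxb⟩
  | @cons a b c hab w ih =>
    obtain ⟨a', ha', hax⟩ := h1
    by_cases hc : ∃ b' ∈ R.model a, x ≤ b'
    · obtain ⟨b', hb', hxb'⟩ := hc
      exact ⟨a, by simp, model_between R _ ha' hb' hax hxb'⟩
    · push_neg at hc
      obtain ⟨pm, hpm1, hpm2⟩ := R.adj_meet hab
      obtain ⟨y, hy, hxy⟩ := ih ⟨pm, hpm2, (hc pm hpm1).le⟩ h2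
      exact ⟨y, by simp [hy], hxy⟩


/-- Split a list at its first element satisfying `Q`. -/
lemma list_split (Q : V → Prop) :
    ∀ l : List V, (∀ y ∈ l, ¬ Q y) ∨
      ∃ l₁ s l₂, l = l₁ ++ s :: l₂ ∧ (∀ y ∈ l₁, ¬ Q y) ∧ Q s := by
  intro l
  induction l with
  | nil => exact Or.inl (by simp)
  | cons a t ih =>
    by_cases ha : Q a
    · exact Or.inr ⟨[], a, t, by simp, by simp, ha⟩
    · rcases ih with h | ⟨l₁, s, l₂, rfl, h1, h2⟩
      · exact Or.inl (by simpa [ha] using h)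
      · exact Or.inr ⟨a :: l₁, s, l₂, by simp, by simpa [ha] using h1, h2⟩

/-- In any list there is a `Q`-free contiguous run of proportional size. -/
lemma exists_clean_run (Q : V → Prop) [DecidablePred Q] :
    ∀ (n : ℕ) (l : List V), l.length ≤ n →
    ∃ r : List V, r <:+: l ∧ (∀ y ∈ r, ¬ Q y) ∧
      l.length ≤ ((l.countP fun y => decide (Q y)) + 1) * r.length
        + l.countP fun y => decide (Q y) := by
  intro n
  induction n with
  | zero =>
    intro l hl
    refine ⟨l, List.infix_rfl, ?_, by omega⟩
    have : l = [] := List.eq_nil_of_length_eq_zero (by omega)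
    simp [this]
  | succ n ih =>
    intro l hl
    rcases list_split Q l with hfree | ⟨l₁, s, l₂, rfl, h1, h2⟩
    · refine ⟨l, List.infix_rfl, hfree, ?_⟩
      have : l.countP (fun y => decide (Q y)) = l.countP (fun y => decide (Q y)) := rfl
      nlinarith [l.length, l.countP_le_length (p := fun y => decide (Q y))]
    · have hlapp : (l₁ ++ s :: l₂).length = l₁.length + 1 + l₂.length := by
        rw [List.length_append, List.length_cons]; omega
      have hlen : l₂.length ≤ n := by rw [hlapp] at hl; omega
      obtain ⟨r₂, hinf, hfree₂, hbound⟩ := ih l₂ hlen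
      have hc : (l₁ ++ s :: l₂).countP (fun y => decide (Q y))
          = l₂.countP (fun y => decide (Q y)) + 1 := by
        rw [List.countP_append, List.countP_cons]
        have : l₁.countP (fun y => decide (Q y)) = 0 := by
          rw [List.countP_eq_zero]
          intro a ha
          simpa using h1 a ha
        simp [this, h2]
      rcases le_or_gt r₂.length l₁.length with hle | hlt
      · refine ⟨l₁, ⟨[], s :: l₂, by simp⟩, h1, ?_⟩
        rw [hc, hlapp]
        nlinarith [hbound]
      · refine ⟨r₂, hinf.trans ⟨l₁ ++ [s], [], by simp⟩, hfree₂, ?_⟩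
        rw [hc, hlapp]
        nlinarith [hbound]

/-- A nodup `G.Adj`-chain contained in `Y` gives a path of the induced graph. -/
lemma path_of_chain {Y : Set V} :
    ∀ (l : List V) (a : V), List.Chain' G.Adj (a :: l) → (a :: l).Nodup →
      (∀ x ∈ a :: l, x ∈ Y) →
      ∃ (ha : a ∈ Y) (b : ↥Y) (p : (G.induce Y).Walk ⟨a, ha⟩ b),
        p.IsPath ∧ p.support.map Subtype.val = a :: l := by
  intro l
  induction l with
  | nil =>
    intro a _ _ hmem
    exact ⟨hmem a (by simp), ⟨a, hmem a (by simp)⟩, Walk.nil, by simp, by simp⟩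
  | cons b t ih =>
    intro a hchain hnodup hmem
    have hab : G.Adj a b := by
      rcases hchain with _ | ⟨h, _⟩
      assumption
    obtain ⟨hb, c, p, hp, hsup⟩ := ih b (hchain.tail) (hnodup.of_cons)
      (fun x hx => hmem x (by simp at hx ⊢; tauto))
    have ha : a ∈ Y := hmem a (by simp)
    have hadj : (G.induce Y).Adj ⟨a, ha⟩ ⟨b, hb⟩ := by simpa using hab
    refine ⟨ha, c, Walk.cons hadj p, ?_, by simp [hsup]⟩
    rw [Walk.cons_isPath_iff]
    refine ⟨hp, fun hmem' => ?_⟩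
    have hm2 : a ∈ b :: t := by
      rw [← hsup]; exact List.mem_map.mpr ⟨_, hmem', rfl⟩
    exact (List.nodup_cons.mp hnodup).1 hm2

def emb0 : pathGraph 0 ↪g G :=
  ⟨⟨Fin.elim0, fun a => a.elim0⟩, fun {a} => a.elim0⟩

def emb1 (x : V) : pathGraph 1 ↪g G :=
  ⟨⟨fun _ => x, fun a b _ => Subsingleton.elim a b⟩, by
    intro a b
    constructor
    · intro h; exact absurd h (G.irrefl)
    · intro h
      rw [pathGraph_adj] at h
      omega⟩

lemma hip_mono {r r' : ℝ} (h : HasInducedPathGE G r') (hrr : r ≤ r') :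
    HasInducedPathGE G r := by
  obtain ⟨m, hm, he⟩ := h
  exact ⟨m, le_trans hrr hm, he⟩

lemma hip_of_induce {Y : Set V} {r : ℝ} (h : HasInducedPathGE (G.induce Y) r) :
    HasInducedPathGE G r := by
  obtain ⟨m, hm, ⟨e⟩⟩ := h
  exact ⟨m, hm, ⟨(SimpleGraph.Embedding.induce Y).comp e⟩⟩


lemma stmt0_core : ∀ (k : ℕ) (V : Type) (_ : Finite V) (G : SimpleGraph V) (m : ℕ)
    (R : TreeRep G (pathGraph (m+1))), R.WidthLT k →
    ∀ n : ℕ, HasPathOfOrder G n →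
    HasInducedPathGE G ((1/3 : ℝ) * (n : ℝ) ^ ((1:ℝ)/(k:ℝ))) := by
  intro k
  induction k with
  | zero =>
    intro V _ G m R hW n hpath
    obtain ⟨p₁, p₂, P, hP, hlen⟩ := hpath
    refine ⟨1, ?_, ⟨emb1 p₁⟩⟩
    norm_num
  | succ k ih =>
    intro V hfin G m R hW n hpath
    classical
    obtain ⟨p₁, p₂, P, hP, hlen⟩ := hpath
    by_cases hsmall : (1/3 : ℝ) * (n : ℝ) ^ ((1:ℝ)/((k+1 : ℕ):ℝ)) ≤ 1
    · refine ⟨1, by simpa using hsmall, ⟨emb1 p₁⟩⟩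
    push_neg at hsmall
    have hn1 : 1 ≤ n := by omega
    have hN0 : (0:ℝ) < (n:ℝ) := by exact_mod_cast hn1
    set N : ℝ := (n:ℝ) with hNdef
    set t : ℝ := N ^ ((1:ℝ)/((k+1 : ℕ):ℝ)) with ht
    have ht0 : 0 < t := Real.rpow_pos_of_pos hN0 _
    have ht3 : 3 < t := by nlinarith [hsmall]
    have hK0 : ((k+1 : ℕ):ℝ) ≠ 0 := by positivity
    have hNt : t ^ ((k+1 : ℕ):ℝ) = N := by
      rw [ht, ← Real.rpow_mul hN0.le]
      rw [one_div_mul_cancel hK0, Real.rpow_one]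
    -- the support list and the extreme nodes of the span
    set l := P.support with hl
    have hlen_l : l.length = n := by rw [hl, SimpleGraph.Walk.length_support]; omega
    set U : Set (Fin (m+1)) := {x | ∃ w ∈ l, x ∈ R.model w} with hU
    have hUne : U.Nonempty := by
      obtain ⟨x, hx⟩ := model_nonempty R p₁
      exact ⟨x, p₁, by rw [hl]; exact P.start_mem_support, hx⟩
    obtain ⟨A, hAU, hAmin⟩ := Set.exists_min_image U id (Set.toFinite U) hUne
    obtain ⟨B, hBU, hBmax⟩ := Set.exists_max_image U id (Set.toFinite U) hUne
    obtain ⟨u, hul, hAu⟩ := hAU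
    obtain ⟨v, hvl, hBv⟩ := hBU
    have hul' : u ∈ P.support := by rw [← hl]; exact hul
    have hvl' : v ∈ P.support := by rw [← hl]; exact hvl
    have hruv : G.Reachable u v :=
      ((P.takeUntil u hul').reverse.reachable).trans (P.takeUntil v hvl').reachable
    obtain ⟨S, hSpath, hSmin⟩ := exists_min_walk hruv
    by_cases hbig : (1/3 : ℝ) * N ^ ((1:ℝ)/((k+1 : ℕ):ℝ)) ≤ ((S.length + 1 : ℕ) : ℝ)
    · exact ⟨S.length + 1, hbig,
        ⟨embOfInduced S hSpath (fun i j hij hj => minwalk_not_adj S hSmin hij hj)⟩⟩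
    push_neg at hbig
    -- the case of width 1 is impossible here
    rcases Nat.eq_zero_or_pos k with rfl | hk1
    · exfalso
      have hn2 : 2 ≤ n := by
        rcases Nat.lt_or_ge n 2 with hlt | hge
        · exfalso
          have hN1 : N = 1 := by rw [hNdef]; norm_num [show n = 1 by omega]
          have he : t = 1 := by rw [ht, hN1, Real.one_rpow]
          rw [he] at ht3; norm_num at ht3
        · exact hge
      have hPlen : 0 < P.length := by omega
      have hadj01 := P.adj_getVert_succ (i := 0) hPlen
      rw [P.getVert_zero] at hadj01
      obtain ⟨s, hs1, hs2⟩ := R.adj_meet hadj01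
      have hpair : ({p₁, P.getVert 1} : Set V) ⊆ R.bag s := by
        rintro x (rfl | rfl)
        · exact hs1
        · exact hs2
      have h2le : 2 ≤ (R.bag s).ncard := by
        rw [← Set.ncard_pair hadj01.ne]
        exact Set.ncard_le_ncard hpair (Set.toFinite _)
      have := hW s
      omega
    -- main case : k ≥ 1
    set Q : V → Prop := fun y => y ∈ S.support with hQ
    obtain ⟨r, hinf, hclean, hbound⟩ := exists_clean_run Q l.length l le_rfl
    set c := l.countP (fun y => decide (Q y)) with hcdef
    have hcle : c ≤ S.length + 1 := by
      rw [hcdef, List.countP_eq_length_filter]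
      have hsub : l.filter (fun y => decide (Q y)) ⊆ S.support := by
        intro y hy
        have := List.of_mem_filter hy
        simpa [hQ] using this
      have hnd : (l.filter (fun y => decide (Q y))).Nodup := by
        rw [hl]; exact hP.support_nodup.filter _
      calc (l.filter (fun y => decide (Q y))).length ≤ S.support.length :=
            (hnd.subperm hsub).length_le
        _ = S.length + 1 := S.length_support
    have hboundN : n ≤ ((S.length + 1) + 1) * r.length + (S.length + 1) := by
      calc n = l.length := hlen_l.symm
        _ ≤ (c+1) * r.length + c := hbound
        _ ≤ ((S.length + 1) + 1) * r.length + (S.length + 1) :=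
            Nat.add_le_add (Nat.mul_le_mul_right _ (by omega)) hcle
    -- real arithmetic : the run is long
    set h : ℝ := ((S.length + 1 : ℕ) : ℝ) with hh
    have hh1 : 1 ≤ h := by rw [hh]; exact_mod_cast Nat.le_add_left 1 _
    have hht3 : h < t/3 := by rw [hh]; rw [← ht] at hbig; linarith [hbig]
    set n' : ℝ := ((r.length : ℕ) : ℝ) with hn'
    have hn'0 : 0 ≤ n' := by positivity
    have hNbound : N ≤ (h+1) * n' + h := by
      rw [hNdef, hh, hn']
      exact_mod_cast hboundN
    have hNt2 : t^(2:ℝ) ≤ N := by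
      rw [← hNt]
      apply Real.rpow_le_rpow_of_exponent_le (by linarith)
      have : (2:ℕ) ≤ k + 1 := by omega
      exact_mod_cast this
    have ht2 : t^(2:ℝ) = t*t := by
      rw [show (2:ℝ) = ((2:ℕ):ℝ) by norm_num, Real.rpow_natCast]; ring
    have hkey : t * h < N * (t - h - 1) := by
      rw [ht2] at hNt2
      nlinarith [hNt2, hht3, ht3, hh1]
    have hrun : N / t ≤ n' := by
      rw [div_le_iff₀ ht0]
      nlinarith [mul_le_mul_of_nonneg_left hNbound ht0.le, hkey, hh1, hn'0, ht0]
    have hNdivt : N / t = N ^ (1 - (1:ℝ)/((k+1 : ℕ):ℝ)) := by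
      rw [Real.rpow_sub hN0, Real.rpow_one, ← ht]
    -- the run is nonempty
    have hrpos : 0 < r.length := by
      by_contra hcon
      have : r.length = 0 := by omega
      rw [hn', this] at hrun
      simp at hrun
      have : 0 < N / t := div_pos hN0 ht0
      linarith
    obtain ⟨a, r', hrr⟩ : ∃ a r', r = a :: r' := by
      cases r with
      | nil => simp at hrpos
      | cons a r' => exact ⟨a, r', rfl⟩
    -- the induced subgraph on the run
    set Y : Set V := {x | x ∈ r} with hYdef
    have hchain : List.Chain' G.Adj r := by
      have := P.isChain_adj_support
      rw [← hl] at this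
      exact this.infix hinf
    have hnodup : r.Nodup := by
      have : l.Nodup := by rw [hl]; exact hP.support_nodup
      exact this.sublist hinf.sublist
    obtain ⟨haY, b, p', hp', hsup'⟩ := path_of_chain (G := G) (Y := Y) r' a
      (hrr ▸ hchain) (hrr ▸ hnodup) (by intro x hx; rw [hYdef, hrr]; exact hx)
    have hpath' : HasPathOfOrder (G.induce Y) r.length := by
      refine ⟨_, b, p', hp', ?_⟩
      have := congrArg List.length hsup'
      rw [List.length_map, SimpleGraph.Walk.length_support] at this
      rw [this, hrr, List.length_cons]
    set R' : TreeRep (G.induce Y) (pathGraph (m+1)) :=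
      ⟨fun y => R.model y.val, fun y => R.model_connected _,
       fun y y' hadj => R.adj_meet (by simpa using hadj)⟩ with hR'
    have hW' : R'.WidthLT k := by
      intro s
      by_cases hcov : ∃ w ∈ S.support, s ∈ R.model w
      · obtain ⟨σ, hσS, hσs⟩ := hcov
        have him : Subtype.val '' (R'.bag s) ⊆ (R.bag s) \ {σ} := by
          rintro _ ⟨y, hy, rfl⟩
          refine ⟨hy, ?_⟩
          intro heq
          have hyr : y.val ∈ r := y.2
          have := hclean y.val hyr
          rw [hQ] at this
          simp only [Set.mem_singleton_iff] at heq
          exact this (heq ▸ hσS)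
        have h1 : (R'.bag s).ncard = (Subtype.val '' (R'.bag s)).ncard :=
          (Set.ncard_image_of_injective _ Subtype.val_injective).symm
        have h2 : (Subtype.val '' (R'.bag s)).ncard ≤ ((R.bag s) \ {σ}).ncard :=
          Set.ncard_le_ncard him (Set.toFinite _)
        have h3 : ((R.bag s) \ {σ}).ncard + 1 = (R.bag s).ncard :=
          Set.ncard_diff_singleton_add_one hσs (Set.toFinite _)
        have h4 := hW s
        omega
      · have hempty : R'.bag s = ∅ := by
          ext y
          simp only [Set.mem_empty_iff_false, iff_false]
          intro hy
          have hyl : y.val ∈ l := hinf.sublist.subset y.2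
          have hsU : s ∈ U := ⟨y.val, hyl, hy⟩
          obtain ⟨w, hw, hws⟩ := walk_cover R S s
            ⟨A, hAu, hAmin s hsU⟩ ⟨B, hBv, hBmax s hsU⟩
          exact hcov ⟨w, hw, hws⟩
        rw [hempty]
        simp
    -- apply the induction hypothesis
    have hrec := ih ↥Y (Subtype.finite) (G.induce Y) m R' hW' r.length hpath'
    refine hip_mono (hip_of_induce hrec) ?_
    -- (1/3) N^(1/(k+1)) ≤ (1/3) n'^(1/k)
    have hk0 : ((k : ℕ):ℝ) ≠ 0 := by
      have : (0:ℕ) < k := hk1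
      positivity
    have hstep1 : N ^ (1 - (1:ℝ)/((k+1 : ℕ):ℝ)) ≤ n' := by rw [← hNdivt]; exact hrun
    have hstep2 : (N ^ (1 - (1:ℝ)/((k+1 : ℕ):ℝ))) ^ ((1:ℝ)/((k : ℕ):ℝ))
        ≤ n' ^ ((1:ℝ)/((k : ℕ):ℝ)) :=
      Real.rpow_le_rpow (Real.rpow_nonneg hN0.le _) hstep1 (by positivity)
    have hstep3 : (N ^ (1 - (1:ℝ)/((k+1 : ℕ):ℝ))) ^ ((1:ℝ)/((k : ℕ):ℝ))
        = N ^ ((1:ℝ)/((k+1 : ℕ):ℝ)) := by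
      rw [← Real.rpow_mul hN0.le]
      congr 1
      have hkr : ((k:ℕ):ℝ) ≠ 0 := hk0
      have hk1r : ((k+1:ℕ):ℝ) ≠ 0 := hK0
      push_cast at hkr hk1r ⊢
      field_simp
      ring
    rw [hstep3] at hstep2
    have : (1/3 : ℝ) * N ^ ((1:ℝ)/((k+1 : ℕ):ℝ)) ≤ (1/3) * n' ^ ((1:ℝ)/((k : ℕ):ℝ)) := by
      linarith
    calc (1/3 : ℝ) * N ^ ((1:ℝ)/((k+1 : ℕ):ℝ))
        ≤ (1/3) * n' ^ ((1:ℝ)/((k : ℕ):ℝ)) := this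
      _ = (1/3) * ((r.length : ℕ):ℝ) ^ ((1:ℝ)/((k : ℕ):ℝ)) := by rw [hn']

end Stmt0Aux

theorem stmt0 {V : Type} [Fintype V] (k : ℕ) (hk : 0 < k) (G : SimpleGraph V) (n : ℕ)
    (hpw : PathwidthLT G k) (hpath : HasPathOfOrder G n) :
    HasInducedPathGE G ((1 / 3 : ℝ) * (n : ℝ) ^ ((1 : ℝ) / k)) := by
  obtain ⟨m, R, hR⟩ := hpw
  exact Stmt0Aux.stmt0_core k V (Finite.of_fintype V) G m R hR n hpath
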